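/- Let G = (V, E) be a finite simple graph, K a nonempty finite type of labels, ψ_{ij} : K × K → ℝ strictly positive potentials with ψ_{ij}(a,b) = ψ_{ji}(b,a) for each edge, and p(y) = (1/Z) ∏_{{i,j}∈E} ψ_{ij}(y_i, y_j) the associated Gibbs distribution on y : V → K. Let L ⊆ V with fixed labels ℓ : L → K, let U = V ∖ L be nonempty, and let r : (U → K) → ℝ be the conditional distribution r(u) = p(ℓ ∪ u) / (∑_{u' : U → K} p(ℓ ∪ u')). Fix n ∈ U and, for each m ∈ U with m ≠ n, a strictly positive probability mass function q_m : K → ℝ. Then the unique maximizer q_n* of the negative KL divergence from the mean-field distribution u ↦ q_n(u_n) · ∏_{m∈U, m≠n} q_m(u_m) to r, over strictly positive probability mass functions q_n on K, satisfies for all k ∈ K: log q_n*(k) = ∑_{w : (NB(n)∩U) → K} (∏_{m∈NB(n)∩U} q_m(w_m)) · log p(Y_n = k | Y_{NB(n)} = ŷ_{NB(n)}(w)) + const, where ŷ_{NB(n)}(w) assigns w_m to unlabeled neighbors m ∈ NB(n)∩U and ℓ_m to labeled neighbors m ∈ NB(n)∩L, p(Y_n = k | Y_{NB(n)} = b) =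 (∏_{m∈NB(n)} ψ_{nm}(k, b_m)) / (∑_{k'∈K} ∏_{m∈NB(n)} ψ_{nm}(k', b_m)), and the constant is independent of k. -/

import Mathlib

open Finset

section helpers

variable {K : Type*} [Fintype K] [Nonempty K]

lemma term_le (s t : K → ℝ) (hs : ∀ k, 0 < s k) (ht : ∀ k, 0 < t k) (k : K) :
    s k * Real.log (t k / s k) ≤ t k - s k := by
  have h1 : Real.log (t k / s k) ≤ t k / s k - 1 :=
    Real.log_le_sub_one_of_pos (div_pos (ht k) (hs k))
  calc s k * Real.log (t k / s k) ≤ s k * (t k / s k - 1) :=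
        mul_le_mul_of_nonneg_left h1 (hs k).le
    _ = t k - s k := by rw [mul_sub, mul_one, mul_div_cancel₀ _ (hs k).ne']

lemma gibbs_ineq (s t : K → ℝ) (hs : ∀ k, 0 < s k) (ht : ∀ k, 0 < t k)
    (hs1 : ∑ k, s k = 1) (ht1 : ∑ k, t k = 1) :
    ∑ k, s k * Real.log (t k / s k) ≤ 0 := by
  calc ∑ k, s k * Real.log (t k / s k) ≤ ∑ k, (t k - s k) :=
        Finset.sum_le_sum (fun k _ => term_le s t hs ht k)
    _ = 0 := by rw [Finset.sum_sub_distrib, hs1, ht1, sub_self]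

lemma gibbs_ineq_strict (s t : K → ℝ) (hs : ∀ k, 0 < s k) (ht : ∀ k, 0 < t k)
    (hs1 : ∑ k, s k = 1) (ht1 : ∑ k, t k = 1) (hne : s ≠ t) :
    ∑ k, s k * Real.log (t k / s k) < 0 := by
  obtain ⟨k0, hk0⟩ : ∃ k0, s k0 ≠ t k0 := by
    by_contra h; push_neg at h; exact hne (funext h)
  have key : ∑ k, s k * Real.log (t k / s k) < ∑ k, (t k - s k) := by
    apply Finset.sum_lt_sum (fun k _ => term_le s t hs ht k)
    refine ⟨k0, Finset.mem_univ _, ?_⟩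
    have hne1 : t k0 / s k0 ≠ 1 := fun h =>
      hk0 ((div_eq_one_iff_eq (hs k0).ne').mp h).symm
    have h1 : Real.log (t k0 / s k0) < t k0 / s k0 - 1 :=
      Real.log_lt_sub_one_of_pos (div_pos (ht k0) (hs k0)) hne1
    calc s k0 * Real.log (t k0 / s k0) < s k0 * (t k0 / s k0 - 1) :=
          mul_lt_mul_of_pos_left h1 (hs k0)
      _ = t k0 - s k0 := by rw [mul_sub, mul_one, mul_div_cancel₀ _ (hs k0).ne']
  have : (∑ k, (t k - s k)) = 0 := by rw [Finset.sum_sub_distrib, hs1, ht1, sub_self]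
  linarith

lemma F_eq (g : K → ℝ) (s : K → ℝ) (hs : ∀ k, 0 < s k) (hs1 : ∑ k, s k = 1) :
    ∑ k, s k * (g k - Real.log (s k))
      = (∑ k, s k * Real.log ((Real.exp (g k) / ∑ k', Real.exp (g k')) / s k))
        + Real.log (∑ k', Real.exp (g k')) := by
  set Zg : ℝ := ∑ k', Real.exp (g k') with hZg
  have hZgpos : 0 < Zg := Finset.sum_pos (fun k _ => Real.exp_pos _) univ_nonempty
  have : ∀ k, s k * (g k - Real.log (s k))
      = s k * Real.log ((Real.exp (g k) / Zg) / s k) + s k * Real.log Zg := by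
    intro k
    rw [Real.log_div (div_pos (Real.exp_pos _) hZgpos).ne' (hs k).ne',
        Real.log_div (Real.exp_pos _).ne' hZgpos.ne', Real.log_exp]
    ring
  rw [Finset.sum_congr rfl (fun k _ => this k), Finset.sum_add_distrib,
      ← Finset.sum_mul, hs1, one_mul]

/-- Softmax maximizer of `s ↦ ∑ k, s k * (g k - log (s k))`. -/
lemma gibbs_max (g : K → ℝ) :
    ∃ qstar : K → ℝ,
      ((∀ k, 0 < qstar k) ∧ ∑ k, qstar k = 1) ∧
      (∀ s : K → ℝ, (∀ k, 0 < s k) → ∑ k, s k = 1 →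
        ∑ k, s k * (g k - Real.log (s k)) ≤ ∑ k, qstar k * (g k - Real.log (qstar k))) ∧
      (∀ s : K → ℝ, (∀ k, 0 < s k) → ∑ k, s k = 1 → s ≠ qstar →
        ∑ k, s k * (g k - Real.log (s k)) < ∑ k, qstar k * (g k - Real.log (qstar k))) ∧
      (∀ k, Real.log (qstar k) = g k - Real.log (∑ k', Real.exp (g k'))) := by
  set Zg : ℝ := ∑ k', Real.exp (g k') with hZg
  have hZgpos : 0 < Zg := Finset.sum_pos (fun k _ => Real.exp_pos _) univ_nonempty
  set qs : K → ℝ := fun k => Real.exp (g k) / Zg with hqs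
  have hqspos : ∀ k, 0 < qs k := fun k => div_pos (Real.exp_pos _) hZgpos
  have hqs1 : ∑ k, qs k = 1 := by
    rw [hqs]; rw [← Finset.sum_div, ← hZg, div_self hZgpos.ne']
  have hFqs : ∑ k, qs k * (g k - Real.log (qs k)) = Real.log Zg := by
    rw [F_eq g qs hqspos hqs1]
    have : ∀ k, qs k * Real.log ((Real.exp (g k) / Zg) / qs k) = 0 := by
      intro k
      rw [hqs]
      simp [div_self (div_pos (Real.exp_pos (g k)) hZgpos).ne']
    rw [Finset.sum_congr rfl (fun k _ => this k), Finset.sum_const_zero, zero_add]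
  refine ⟨qs, ⟨hqspos, hqs1⟩, ?_, ?_, ?_⟩
  · intro s hspos hs1
    rw [hFqs, F_eq g s hspos hs1]
    have := gibbs_ineq s qs hspos hqspos hs1 hqs1
    linarith
  · intro s hspos hs1 hne
    rw [hFqs, F_eq g s hspos hs1]
    have := gibbs_ineq_strict s qs hspos hqspos hs1 hqs1 hne
    linarith
  · intro k
    rw [hqs]
    rw [Real.log_div (Real.exp_pos _).ne' hZgpos.ne', Real.log_exp]

/-- Marginalization lemma. -/
lemma marginal {I : Type*} [Fintype I] [DecidableEq I] (P : I → Prop) [DecidablePred P]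
    (q : I → K → ℝ) (hq1 : ∀ i, ∑ k, q i k = 1)
    (F : (I → K) → ℝ)
    (hF : ∀ v v' : I → K, (∀ i, P i → v i = v' i) → F v = F v') :
    ∑ v : I → K, (∏ i, q i (v i)) * F v
      = ∑ w : {i // P i} → K, (∏ i, q i.1 (w i)) *
          F (fun i => if h : P i then w ⟨i, h⟩ else Classical.arbitrary K) := by
  classical
  set e := Equiv.piEquivPiSubtypeProd P (fun _ : I => K) with he
  rw [← Equiv.sum_comp e.symm (fun v => (∏ i, q i (v i)) * F v)]
  rw [Fintype.sum_prod_type]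
  have key : ∀ (a : {i // P i} → K) (b : {i // ¬ P i} → K),
      (∏ i, q i (e.symm (a, b) i)) * F (e.symm (a, b))
        = ((∏ i, q i.1 (a i)) * F (fun i => if h : P i then a ⟨i, h⟩ else Classical.arbitrary K))
          * ∏ i : {i // ¬ P i}, q i.1 (b i) := by
    intro a b
    have hv : ∀ i : I, e.symm (a, b) i = if h : P i then a ⟨i, h⟩ else b ⟨i, h⟩ := by
      intro i; simp [he, Equiv.piEquivPiSubtypeProd]
    have hprod : (∏ i, q i (e.symm (a, b) i))
        = (∏ i : {i // P i}, q i.1 (a i)) * ∏ i : {i // ¬ P i}, q i.1 (b i) := by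
      rw [← Fintype.prod_subtype_mul_prod_subtype P (fun i => q i (e.symm (a, b) i))]
      congr 1
      · exact Finset.prod_congr rfl (fun i _ => by rw [hv i.1, dif_pos i.2])
      · exact Finset.prod_congr rfl (fun i _ => by rw [hv i.1, dif_neg i.2])
    have hFv : F (e.symm (a, b))
        = F (fun i => if h : P i then a ⟨i, h⟩ else Classical.arbitrary K) := by
      apply hF
      intro i hi
      rw [hv i, dif_pos hi, dif_pos hi]
    rw [hprod, hFv]; ring
  rw [Finset.sum_congr rfl (fun a _ => Finset.sum_congr rfl (fun b _ => key a b))]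
  have hb1 : ∑ b : {i // ¬ P i} → K, ∏ i : {i // ¬ P i}, q i.1 (b i) = 1 := by
    rw [← Fintype.prod_sum (fun (i : {i // ¬ P i}) k => q i.1 k)]
    exact Finset.prod_eq_one (fun i _ => hq1 i.1)
  exact Finset.sum_congr rfl (fun a _ => by rw [← Finset.mul_sum, hb1, mul_one])

end helpers

lemma edge_sum_at {V : Type*} [Fintype V] [LinearOrder V]
    {K : Type*} (G : SimpleGraph V) [DecidableRel G.Adj]
    (ψ : V → V → K → K → ℝ)
    (hsymm : ∀ i j, G.Adj i j → ∀ a b, ψ i j a b = ψ j i b a)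
    (n : V) (y : V → K) :
    ∑ e ∈ (Finset.univ.filter (fun e : V × V => G.Adj e.1 e.2 ∧ e.1 < e.2)).filter
        (fun e => e.1 = n ∨ e.2 = n), Real.log (ψ e.1 e.2 (y e.1) (y e.2))
      = ∑ m ∈ G.neighborFinset n, Real.log (ψ n m (y n) (y m)) := by
  refine Finset.sum_bij' (fun e _ => if e.1 = n then e.2 else e.1)
    (fun m _ => if n < m then (n, m) else (m, n)) ?_ ?_ ?_ ?_ ?_
  · intro e he
    simp only [mem_filter, mem_univ, true_and] at he
    obtain ⟨⟨hadj, hlt⟩, hn⟩ := he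
    rcases hn with h1 | h2
    · rw [if_pos h1, SimpleGraph.mem_neighborFinset]; rw [h1] at hadj; exact hadj
    · have hne : e.1 ≠ n := by rintro rfl; exact absurd h2 (ne_of_gt hlt)
      rw [if_neg hne, SimpleGraph.mem_neighborFinset]; rw [h2] at hadj; exact hadj.symm
  · intro m hm
    rw [SimpleGraph.mem_neighborFinset] at hm
    simp only [mem_filter, mem_univ, true_and]
    rcases lt_trichotomy n m with h | h | h
    · rw [if_pos h]; exact ⟨⟨hm, h⟩, Or.inl rfl⟩
    · exact absurd h hm.ne
    · rw [if_neg (not_lt.mpr h.le)]; exact ⟨⟨hm.symm, h⟩, Or.inr rfl⟩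
  · intro e he
    simp only [mem_filter, mem_univ, true_and] at he
    obtain ⟨⟨hadj, hlt⟩, hn⟩ := he
    by_cases h1 : e.1 = n
    · rw [if_pos h1, if_pos (h1 ▸ hlt), ← h1]
    · rw [if_neg h1]
      have h2 : e.2 = n := hn.resolve_left h1
      rw [if_neg (by rw [← h2]; exact not_lt.mpr hlt.le), ← h2]
  · intro m hm
    rw [SimpleGraph.mem_neighborFinset] at hm
    rcases lt_trichotomy n m with h | h | h
    · rw [if_pos h]; dsimp only; rw [if_pos rfl]
    · exact absurd h hm.ne
    · rw [if_neg (not_lt.mpr h.le)]; dsimp only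
      rw [if_neg (fun h' : m = n => hm.ne (h' ▸ rfl))]
  · intro e he
    simp only [mem_filter, mem_univ, true_and] at he
    obtain ⟨⟨hadj, hlt⟩, hn⟩ := he
    by_cases h1 : e.1 = n
    · rw [if_pos h1, h1]
    · have h2 : e.2 = n := hn.resolve_left h1
      rw [if_neg h1, hsymm e.1 e.2 hadj, h2]

/-- GMNN Theorem 1 (optimality condition for the mean-field variational update in a
pairwise conditional random field): given a Gibbs distribution
`p y = (1/Z) ∏_{{i,j} ∈ E} ψ i j (y i) (y j)` on labelings of a finite graph, labeled
vertices `L` with labels `ℓ`, and fixed strictly positive mean-field factors `q m` for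
unlabeled `m ≠ n`, the unique maximizer `q_n*` of the negative KL divergence from the
mean-field distribution to the conditional distribution `r = p(· | y_L = ℓ)` satisfies
`log q_n*(k) = E_{q(y_{NB(n) ∩ U})} [log p (y_n = k | y_{NB(n)})] + const`. -/
theorem gmnn_meanfield_optimality {V : Type*} [Fintype V] [LinearOrder V]
    {K : Type*} [Fintype K] [Nonempty K]
    (G : SimpleGraph V) [DecidableRel G.Adj]
    (ψ : V → V → K → K → ℝ)
    (hpos : ∀ i j, G.Adj i j → ∀ a b, 0 < ψ i j a b)
    (hsymm : ∀ i j, G.Adj i j → ∀ a b, ψ i j a b = ψ j i b a)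
    (L : Finset V) (ℓ : {v : V // v ∈ L} → K)
    (hU : Nonempty {v : V // v ∉ L})
    (n : {v : V // v ∉ L})
    (q : {v : V // v ∉ L} → K → ℝ)
    (hq : ∀ m, m ≠ n → ∀ k, 0 < q m k)
    (hq1 : ∀ m, m ≠ n → ∑ k, q m k = 1) :
    let w : (V → K) → ℝ := fun y =>
      ∏ e ∈ Finset.univ.filter (fun e : V × V => G.Adj e.1 e.2 ∧ e.1 < e.2),
        ψ e.1 e.2 (y e.1) (y e.2)
    let Z : ℝ := ∑ y : V → K, w y
    let p : (V → K) → ℝ := fun y => w y / Z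
    let full : ({v : V // v ∉ L} → K) → (V → K) := fun u v =>
      if h : v ∈ L then ℓ ⟨v, h⟩ else u ⟨v, h⟩
    let r : ({v : V // v ∉ L} → K) → ℝ := fun u =>
      p (full u) / ∑ u' : {v : V // v ∉ L} → K, p (full u')
    let Φ : (K → ℝ) → ℝ := fun s =>
      ∑ u : {v : V // v ∉ L} → K,
        (s (u n) * ∏ m ∈ Finset.univ.filter (fun m => m ≠ n), q m (u m)) *
          (Real.log (r u)
            - Real.log (s (u n) * ∏ m ∈ Finset.univ.filter (fun m => m ≠ n), q m (u m)))
    let pcond : K → (V → K) → ℝ := fun k b =>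
      (∏ m ∈ G.neighborFinset n.1, ψ n.1 m k (b m))
        / ∑ k' : K, ∏ m ∈ G.neighborFinset n.1, ψ n.1 m k' (b m)
    let yhat : ({m : V // m ∈ G.neighborFinset n.1 ∧ m ∉ L} → K) → (V → K) := fun w0 v =>
      if h : v ∈ L then ℓ ⟨v, h⟩
      else if h2 : v ∈ G.neighborFinset n.1 ∧ v ∉ L then w0 ⟨v, h2⟩
      else Classical.arbitrary K
    ∃ qstar : K → ℝ,
      ((∀ k, 0 < qstar k) ∧ ∑ k, qstar k = 1) ∧
      (∀ s : K → ℝ, (∀ k, 0 < s k) → ∑ k, s k = 1 → Φ s ≤ Φ qstar) ∧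
      (∀ s : K → ℝ, (∀ k, 0 < s k) → ∑ k, s k = 1 →
        (∀ s' : K → ℝ, (∀ k, 0 < s' k) → ∑ k, s' k = 1 → Φ s' ≤ Φ s) → s = qstar) ∧
      (∃ c : ℝ, ∀ k : K,
        Real.log (qstar k)
          = (∑ w0 : {m : V // m ∈ G.neighborFinset n.1 ∧ m ∉ L} → K,
              (∏ m, q ⟨m.1, m.2.2⟩ (w0 m)) * Real.log (pcond k (yhat w0))) + c) := by
  intro w Z p full r Φ pcond yhat
  -- positivity
  have hwpos : ∀ y, 0 < w y := fun y =>
    Finset.prod_pos (fun e he => hpos e.1 e.2 (Finset.mem_filter.mp he).2.1 _ _)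
  have hZpos : 0 < Z := Finset.sum_pos (fun y _ => hwpos y) univ_nonempty
  have hppos : ∀ y, 0 < p y := fun y => div_pos (hwpos y) hZpos
  have hSpos : 0 < ∑ u' : {v : V // v ∉ L} → K, p (full u') :=
    Finset.sum_pos (fun u _ => hppos _) univ_nonempty
  have hrpos : ∀ u, 0 < r u := fun u => div_pos (hppos _) hSpos
  -- splitting off coordinate n
  set mk : K → ({m : {v : V // v ∉ L} // m ≠ n} → K) → ({v : V // v ∉ L} → K) :=
    fun k v => (Equiv.funSplitAt n K).symm (k, v) with hmkdef
  have hmk_apply : ∀ k v j, mk k v j = if h : j = n then k else v ⟨j, h⟩ := by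
    intro k v j
    simp [hmkdef, Equiv.funSplitAt, Equiv.piSplitAt]
  have hmk_n : ∀ k v, mk k v n = k := by
    intro k v; rw [hmk_apply, dif_pos rfl]
  have hmk_ne : ∀ k v (j : {v : V // v ∉ L}) (h : j ≠ n), mk k v j = v ⟨j, h⟩ := by
    intro k v j h; rw [hmk_apply, dif_neg h]
  have hreindex : ∀ f : ({v : V // v ∉ L} → K) → ℝ,
      ∑ u, f u = ∑ k, ∑ v, f (mk k v) := by
    intro f
    rw [← Equiv.sum_comp (Equiv.funSplitAt n K).symm f, Fintype.sum_prod_type]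
  -- the mean-field weight over the other coordinates
  set Q' : ({m : {v : V // v ∉ L} // m ≠ n} → K) → ℝ := fun v => ∏ m, q m.1 (v m) with hQ'def
  have hQ'pos : ∀ v, 0 < Q' v := fun v => Finset.prod_pos (fun m _ => hq m.1 m.2 _)
  have hQ'1 : ∑ v, Q' v = 1 := by
    rw [hQ'def, ← Fintype.prod_sum (fun (m : {m : {v : V // v ∉ L} // m ≠ n}) k => q m.1 k)]
    exact Finset.prod_eq_one (fun m _ => hq1 m.1 m.2)
  have hQ0 : ∀ u : {v : V // v ∉ L} → K,
      (∏ m ∈ Finset.univ.filter (fun m => m ≠ n), q m (u m)) = Q' (fun m => u m.1) := by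
    intro u
    rw [hQ'def]
    exact Finset.prod_subtype (Finset.univ.filter (fun m => m ≠ n))
      (by simp) (fun m => q m (u m))
  have hQ0mk : ∀ k v, Q' (fun m : {m : {v : V // v ∉ L} // m ≠ n} => mk k v m.1) = Q' v := by
    intro k v
    congr 1
    funext m
    exact hmk_ne k v m.1 m.2
  -- the per-label objective
  set g : K → ℝ := fun k => ∑ v, Q' v * (Real.log (r (mk k v)) - Real.log (Q' v)) with hgdef
  -- Φ in terms of g
  have hΦ : ∀ s : K → ℝ, (∀ k, 0 < s k) →
      Φ s = ∑ k, s k * (g k - Real.log (s k)) := by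
    intro s hs
    have step1 : ∀ u : {v : V // v ∉ L} → K,
        (s (u n) * ∏ m ∈ Finset.univ.filter (fun m => m ≠ n), q m (u m)) *
          (Real.log (r u)
            - Real.log (s (u n) * ∏ m ∈ Finset.univ.filter (fun m => m ≠ n), q m (u m)))
        = (s (u n) * Q' (fun m => u m.1)) *
          (Real.log (r u) - Real.log (s (u n)) - Real.log (Q' (fun m => u m.1))) := by
      intro u
      rw [hQ0 u, Real.log_mul (hs _).ne' (hQ'pos _).ne']
      ring
    show (∑ u : {v : V // v ∉ L} → K, _) = _
    rw [Finset.sum_congr rfl (fun u _ => step1 u)]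
    rw [hreindex (fun u => (s (u n) * Q' (fun m => u m.1)) *
          (Real.log (r u) - Real.log (s (u n)) - Real.log (Q' (fun m => u m.1))))]
    refine Finset.sum_congr rfl (fun k _ => ?_)
    have step2 : ∀ v, (s (mk k v n) * Q' (fun m => mk k v m.1)) *
          (Real.log (r (mk k v)) - Real.log (s (mk k v n))
            - Real.log (Q' (fun m => mk k v m.1)))
        = s k * (Q' v * (Real.log (r (mk k v)) - Real.log (Q' v)))
          - (s k * Real.log (s k)) * Q' v := by
      intro v
      rw [hmk_n k v, hQ0mk k v]
      ring
    rw [Finset.sum_congr rfl (fun v _ => step2 v), Finset.sum_sub_distrib,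
        ← Finset.mul_sum, ← Finset.mul_sum, hQ'1, mul_one, hgdef]
    ring
  -- apply the softmax maximizer
  obtain ⟨qstar, ⟨hqspos, hqs1⟩, hmax, hstrict, hlog⟩ := gibbs_max g
  refine ⟨qstar, ⟨hqspos, hqs1⟩, ?_, ?_, ?_⟩
  · intro s hs hs1
    rw [hΦ s hs, hΦ qstar hqspos]
    exact hmax s hs hs1
  · intro s hs hs1 hmaxs
    by_contra hne
    have h1 := hstrict s hs hs1 hne
    have h2 := hmaxs qstar hqspos hqs1
    rw [hΦ s hs, hΦ qstar hqspos] at h2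
    linarith
  -- the optimality equation
  · -- basic evaluation lemmas for `full ∘ mk` and `yhat`
    have hne_of_mem : ∀ (x : V), x ∈ G.neighborFinset n.1 → x ≠ n.1 :=
      fun x hx => ((SimpleGraph.mem_neighborFinset _ _ _).mp hx).ne'
    have hfull_L : ∀ (u : {v : V // v ∉ L} → K) (x : V) (h : x ∈ L), full u x = ℓ ⟨x, h⟩ :=
      fun u x h => dif_pos h
    have hfull_ne : ∀ k v (x : V) (hx : x ≠ n.1) (hxL : x ∉ L),
        full (mk k v) x = v ⟨⟨x, hxL⟩, fun hh => hx (congrArg Subtype.val hh)⟩ := by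
      intro k v x hx hxL
      show (if h : x ∈ L then ℓ ⟨x, h⟩ else mk k v ⟨x, h⟩) = _
      rw [dif_neg hxL, hmk_ne k v ⟨x, hxL⟩ (fun hh => hx (congrArg Subtype.val hh))]
    have hfull_n : ∀ k v, full (mk k v) n.1 = k := by
      intro k v
      show (if h : n.1 ∈ L then ℓ ⟨n.1, h⟩ else mk k v ⟨n.1, h⟩) = k
      rw [dif_neg n.2]
      exact hmk_n k v
    have hfull_indep : ∀ k k' v (x : V), x ≠ n.1 → full (mk k v) x = full (mk k' v) x := by
      intro k k' v x hx
      by_cases hL : x ∈ L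
      · rw [hfull_L _ _ hL, hfull_L _ _ hL]
      · rw [hfull_ne k v x hx hL, hfull_ne k' v x hx hL]
    have hyhat_L : ∀ w0 (x : V) (h : x ∈ L), yhat w0 x = ℓ ⟨x, h⟩ := fun w0 x h => dif_pos h
    have hyhat_U : ∀ w0 (x : V) (h1 : x ∉ L) (h2 : x ∈ G.neighborFinset n.1),
        yhat w0 x = w0 ⟨x, h2, h1⟩ := by
      intro w0 x h1 h2
      show (if h : x ∈ L then ℓ ⟨x, h⟩
        else if h2 : x ∈ G.neighborFinset n.1 ∧ x ∉ L then w0 ⟨x, h2⟩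
        else Classical.arbitrary K) = _
      rw [dif_neg h1, dif_pos (⟨h2, h1⟩ : x ∈ G.neighborFinset n.1 ∧ x ∉ L)]
    -- logarithms of the Gibbs weights
    have hlogr : ∀ u, Real.log (r u) = Real.log (w (full u)) - Real.log Z
        - Real.log (∑ u' : {v : V // v ∉ L} → K, p (full u')) := by
      intro u
      show Real.log (p (full u) / ∑ u' : {v : V // v ∉ L} → K, p (full u')) = _
      rw [Real.log_div (hppos _).ne' hSpos.ne']
      show Real.log (w (full u) / Z) - _ = _
      rw [Real.log_div (hwpos _).ne' hZpos.ne']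
    have hlogw : ∀ y : V → K, Real.log (w y)
        = ∑ e ∈ Finset.univ.filter (fun e : V × V => G.Adj e.1 e.2 ∧ e.1 < e.2),
            Real.log (ψ e.1 e.2 (y e.1) (y e.2)) :=
      fun y => Real.log_prod
        (fun e he => (hpos e.1 e.2 (Finset.mem_filter.mp he).2.1 _ _).ne')
    have hlogw_split : ∀ y : V → K, Real.log (w y)
        = (∑ m ∈ G.neighborFinset n.1, Real.log (ψ n.1 m (y n.1) (y m)))
          + ∑ e ∈ (Finset.univ.filter (fun e : V × V => G.Adj e.1 e.2 ∧ e.1 < e.2)).filter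
              (fun e => ¬(e.1 = n.1 ∨ e.2 = n.1)),
              Real.log (ψ e.1 e.2 (y e.1) (y e.2)) := by
      intro y
      rw [hlogw y,
        ← Finset.sum_filter_add_sum_filter_not
          (Finset.univ.filter (fun e : V × V => G.Adj e.1 e.2 ∧ e.1 < e.2))
          (fun e => e.1 = n.1 ∨ e.2 = n.1),
        edge_sum_at G ψ hsymm n.1 y]
    -- the part of the energy involving vertex n
    set Fk : K → ({m : {v : V // v ∉ L} // m ≠ n} → K) → ℝ := fun k v =>
      ∑ m ∈ G.neighborFinset n.1, Real.log (ψ n.1 m k (full (mk k v) m)) with hFkdef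
    -- the rest of the energy does not depend on the label at n
    set k0 : K := Classical.arbitrary K with hk0def
    set Rv : ({m : {v : V // v ∉ L} // m ≠ n} → K) → ℝ := fun v =>
      ∑ e ∈ (Finset.univ.filter (fun e : V × V => G.Adj e.1 e.2 ∧ e.1 < e.2)).filter
          (fun e => ¬(e.1 = n.1 ∨ e.2 = n.1)),
          Real.log (ψ e.1 e.2 (full (mk k0 v) e.1) (full (mk k0 v) e.2)) with hRvdef
    have hrest : ∀ k v,
        (∑ e ∈ (Finset.univ.filter (fun e : V × V => G.Adj e.1 e.2 ∧ e.1 < e.2)).filter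
            (fun e => ¬(e.1 = n.1 ∨ e.2 = n.1)),
            Real.log (ψ e.1 e.2 (full (mk k v) e.1) (full (mk k v) e.2))) = Rv v := by
      intro k v
      rw [hRvdef]
      refine Finset.sum_congr rfl (fun e he => ?_)
      simp only [Finset.mem_filter, Finset.mem_univ, true_and, not_or] at he
      rw [hfull_indep k k0 v e.1 he.2.1, hfull_indep k k0 v e.2 he.2.2]
    set CZ : ℝ := Real.log Z + Real.log (∑ u' : {v : V // v ∉ L} → K, p (full u'))
      with hCZdef
    set Cb : ℝ := ∑ v, (Q' v * Rv v - CZ * Q' v - Q' v * Real.log (Q' v)) with hCbdef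
    have hGk : ∀ k, g k = (∑ v, Q' v * Fk k v) + Cb := by
      intro k
      have step : ∀ v, Q' v * (Real.log (r (mk k v)) - Real.log (Q' v))
          = Q' v * Fk k v + (Q' v * Rv v - CZ * Q' v - Q' v * Real.log (Q' v)) := by
        intro v
        rw [hlogr (mk k v), hlogw_split (full (mk k v)), hfull_n k v, hrest k v,
          hCZdef, hFkdef]
        ring
      rw [hgdef]
      show (∑ v, Q' v * (Real.log (r (mk k v)) - Real.log (Q' v))) = _
      rw [Finset.sum_congr rfl (fun v _ => step v), Finset.sum_add_distrib, hCbdef]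
    -- Fk only depends on the coordinates in the neighborhood of n
    have hdep : ∀ k (v v' : {m : {v : V // v ∉ L} // m ≠ n} → K),
        (∀ i : {m : {v : V // v ∉ L} // m ≠ n},
          (i.1.1 : V) ∈ G.neighborFinset n.1 → v i = v' i) →
        Fk k v = Fk k v' := by
      intro k v v' hvv
      rw [hFkdef]
      refine Finset.sum_congr rfl (fun m hm => ?_)
      have hmn : m ≠ n.1 := hne_of_mem m hm
      by_cases hL : m ∈ L
      · rw [hfull_L _ _ hL, hfull_L _ _ hL]
      · rw [hfull_ne k v m hmn hL, hfull_ne k v' m hmn hL]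
        exact congrArg (fun x => Real.log (ψ n.1 m k x))
          (hvv ⟨⟨m, hL⟩, fun hh => hmn (congrArg Subtype.val hh)⟩ hm)
    -- marginalize out the coordinates away from the neighborhood
    have hmarg : ∀ k, (∑ v, Q' v * Fk k v)
        = ∑ w1 : {i : {m : {v : V // v ∉ L} // m ≠ n} //
              (i.1.1 : V) ∈ G.neighborFinset n.1} → K,
            (∏ i, q i.1.1 (w1 i)) *
              Fk k (fun i => if h : (i.1.1 : V) ∈ G.neighborFinset n.1 then w1 ⟨i, h⟩
                else Classical.arbitrary K) := by
      intro k
      have := marginal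
        (fun i : {m : {v : V // v ∉ L} // m ≠ n} => (i.1.1 : V) ∈ G.neighborFinset n.1)
        (fun i => q i.1) (fun i => hq1 i.1 i.2) (Fk k) (hdep k)
      simpa [hQ'def] using this
    -- re-index the neighborhood coordinates
    have hι : ∀ a : {m : V // m ∈ G.neighborFinset n.1 ∧ m ∉ L},
        ((⟨⟨a.1, a.2.2⟩, fun hh => hne_of_mem a.1 a.2.1 (congrArg Subtype.val hh)⟩ :
          {m : {v : V // v ∉ L} // m ≠ n}).1.1 : V) ∈ G.neighborFinset n.1 := fun a => a.2.1
    set ι : {i : {m : {v : V // v ∉ L} // m ≠ n} // (i.1.1 : V) ∈ G.neighborFinset n.1}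
        ≃ {m : V // m ∈ G.neighborFinset n.1 ∧ m ∉ L} :=
      { toFun := fun i => ⟨i.1.1.1, i.2, i.1.1.2⟩
        invFun := fun a => ⟨⟨⟨a.1, a.2.2⟩,
          fun hh => hne_of_mem a.1 a.2.1 (congrArg Subtype.val hh)⟩, a.2.1⟩
        left_inv := fun i => rfl
        right_inv := fun a => rfl } with hιdef
    set_option maxHeartbeats 2000000 in
    have hfin : ∀ k, (∑ w1 : {i : {m : {v : V // v ∉ L} // m ≠ n} //
              (i.1.1 : V) ∈ G.neighborFinset n.1} → K,
            (∏ i, q i.1.1 (w1 i)) *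
              Fk k (fun i => if h : (i.1.1 : V) ∈ G.neighborFinset n.1 then w1 ⟨i, h⟩
                else Classical.arbitrary K))
        = ∑ w0 : {m : V // m ∈ G.neighborFinset n.1 ∧ m ∉ L} → K,
            (∏ m, q ⟨m.1, m.2.2⟩ (w0 m)) *
              (∑ m ∈ G.neighborFinset n.1, Real.log (ψ n.1 m k (yhat w0 m))) := by
      intro k
      refine Fintype.sum_equiv (Equiv.arrowCongr ι (Equiv.refl K))
        (fun w1 => (∏ i, q i.1.1 (w1 i)) *
          Fk k (fun i => if h : (i.1.1 : V) ∈ G.neighborFinset n.1 then w1 ⟨i, h⟩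
            else Classical.arbitrary K))
        (fun w0 => (∏ m, q ⟨m.1, m.2.2⟩ (w0 m)) *
          (∑ m ∈ G.neighborFinset n.1, Real.log (ψ n.1 m k (yhat w0 m))))
        (fun w1 => ?_)
      show (∏ i, q i.1.1 (w1 i)) *
          Fk k (fun i => if h : (i.1.1 : V) ∈ G.neighborFinset n.1 then w1 ⟨i, h⟩
            else Classical.arbitrary K)
        = (∏ m, q ⟨m.1, m.2.2⟩ ((Equiv.arrowCongr ι (Equiv.refl K) w1) m)) *
          (∑ m ∈ G.neighborFinset n.1,
            Real.log (ψ n.1 m k (yhat (Equiv.arrowCongr ι (Equiv.refl K) w1) m)))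
      refine congrArg₂ (· * ·) ?_ ?_
      · refine Fintype.prod_equiv ι _ _ (fun i => ?_)
        simp only [Equiv.arrowCongr_apply, Equiv.refl_symm, Equiv.coe_refl,
          Function.comp_apply, id_eq]
        rw [Equiv.symm_apply_apply]
        exact congrArg (fun z => q z (w1 i)) (Subtype.ext rfl)
      · rw [hFkdef]
        refine Finset.sum_congr rfl (fun m hm => ?_)
        have hmn : m ≠ n.1 := hne_of_mem m hm
        by_cases hL : m ∈ L
        · rw [hfull_L _ _ hL, hyhat_L _ _ hL]
        · rw [hfull_ne k _ m hmn hL, hyhat_U _ m hL hm]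
          rw [dif_pos (show ((⟨⟨m, hL⟩, fun hh => hmn (congrArg Subtype.val hh)⟩ :
            {m : {v : V // v ∉ L} // m ≠ n}).1.1 : V) ∈ G.neighborFinset n.1 from hm)]
          rfl
    -- rewrite the target in terms of local energies
    set c3 : ℝ := ∑ w0 : {m : V // m ∈ G.neighborFinset n.1 ∧ m ∉ L} → K,
        (∏ m, q ⟨m.1, m.2.2⟩ (w0 m)) *
          Real.log (∑ k' : K, ∏ m ∈ G.neighborFinset n.1, ψ n.1 m k' (yhat w0 m)) with hc3def
    have hpcond_log : ∀ k (b : V → K), Real.log (pcond k b)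
        = (∑ m ∈ G.neighborFinset n.1, Real.log (ψ n.1 m k (b m)))
          - Real.log (∑ k' : K, ∏ m ∈ G.neighborFinset n.1, ψ n.1 m k' (b m)) := by
      intro k b
      have hnum : ∀ k', 0 < ∏ m ∈ G.neighborFinset n.1, ψ n.1 m k' (b m) :=
        fun k' => Finset.prod_pos
          (fun m hm => hpos n.1 m ((SimpleGraph.mem_neighborFinset _ _ _).mp hm) _ _)
      have hden : 0 < ∑ k' : K, ∏ m ∈ G.neighborFinset n.1, ψ n.1 m k' (b m) :=
        Finset.sum_pos (fun k' _ => hnum k') univ_nonempty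
      show Real.log ((∏ m ∈ G.neighborFinset n.1, ψ n.1 m k (b m))
        / ∑ k' : K, ∏ m ∈ G.neighborFinset n.1, ψ n.1 m k' (b m)) = _
      rw [Real.log_div (hnum k).ne' hden.ne',
        Real.log_prod (fun m hm =>
          (hpos n.1 m ((SimpleGraph.mem_neighborFinset _ _ _).mp hm) _ _).ne')]
    have hTk : ∀ k, (∑ w0 : {m : V // m ∈ G.neighborFinset n.1 ∧ m ∉ L} → K,
            (∏ m, q ⟨m.1, m.2.2⟩ (w0 m)) *
              (∑ m ∈ G.neighborFinset n.1, Real.log (ψ n.1 m k (yhat w0 m))))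
        = (∑ w0 : {m : V // m ∈ G.neighborFinset n.1 ∧ m ∉ L} → K,
            (∏ m, q ⟨m.1, m.2.2⟩ (w0 m)) * Real.log (pcond k (yhat w0))) + c3 := by
      intro k
      rw [hc3def, ← Finset.sum_add_distrib]
      refine Finset.sum_congr rfl (fun w0 _ => ?_)
      rw [hpcond_log k (yhat w0)]
      ring
    refine ⟨c3 + Cb - Real.log (∑ k', Real.exp (g k')), fun k => ?_⟩
    rw [hlog k, hGk k, hmarg k, hfin k, hTk k]
    ring
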